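/- Combining the conformal quantile lemma with the acceptance rule: let $(b_1,r_1,\hat r_1),\dots,(b_n,r_n,\hat r_n),(b,r,\hat r)$ be such that the residuals $e_i = r_i - \hat r_i$ and $e = r - \hat r$ are exchangeable real random variables, and let $q_\alpha$ be the $\lceil (n+1)(1-\alpha)\rceil$-th smallest residual among $e_1,\dots,e_n$ (assumed $\le n$). Then $\mathbb{P}[(r > c) \text{ and } (\hat r < c - q_\alpha)] \le \alpha$ for every $c \in \mathbb{R}$. -/

import Mathlib

open MeasureTheory ProbabilityTheory

/-- The `k`-th smallest element of a list of reals (1-indexed). -/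
noncomputable def orderStat (l : List ℝ) (k : ℕ) : ℝ :=
  (l.insertionSort (· ≤ ·)).getD (k - 1) 0

/-- A finite family of real random variables is exchangeable if its joint law
is invariant under permutations of the indices. -/
def Exchangeable {Ω : Type*} [MeasureSpace Ω] {m : ℕ} (e : Fin m → Ω → ℝ) : Prop :=
  ∀ σ : Equiv.Perm (Fin m),
    Measure.map (fun ω => fun i => e (σ i) ω) (ℙ : Measure Ω) =
      Measure.map (fun ω => fun i => e i ω) (ℙ : Measure Ω)

open scoped ENNReal

lemma countP_mono_of_take {s : List ℝ} {p : ℝ → Bool} {k : ℕ} (hk : k ≤ s.length)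
    (h : ∀ x ∈ s.take k, p x) : k ≤ s.countP p := by
  have h1 : (s.take k).countP p = (s.take k).length := List.countP_eq_length.mpr h
  have h2 : s.countP p = (s.take k).countP p + (s.drop k).countP p := by
    rw [← List.countP_append, List.take_append_drop]
  have h3 : (s.take k).length = k := by rw [List.length_take]; omega
  omega

lemma orderStat_lt {l : List ℝ} {k : ℕ} {t : ℝ} (hk1 : 1 ≤ k) (hkl : k ≤ l.length)
    (h : orderStat l k < t) : k ≤ l.countP (fun x => decide (x < t)) := by
  set s := l.insertionSort (· ≤ ·) with hs
  have hperm : s.Perm l := List.perm_insertionSort _ l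
  have hlen : s.length = l.length := hperm.length_eq
  have hsort : s.Pairwise (· ≤ ·) := List.pairwise_insertionSort _ l
  rw [← hperm.countP_eq]
  apply countP_mono_of_take (by omega)
  intro x hx
  obtain ⟨i, hi, hget⟩ := List.mem_take_iff_getElem.mp hx
  simp only [decide_eq_true_eq]
  have hik : i < k := by simp at hi; omega
  have hi' : i < s.length := by omega
  have hk' : k - 1 < s.length := by omega
  have hle : s[i] ≤ s[k-1] := by
    rcases Nat.lt_or_ge i (k-1) with h' | h'
    · simpa using List.pairwise_iff_get.mp hsort ⟨i, hi'⟩ ⟨k-1, hk'⟩ (by simpa using h')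
    · have : i = k - 1 := by omega
      simp [this]
  have hst : orderStat l k = s[k-1] := by
    rw [orderStat, ← hs, List.getD_eq_getElem _ _ hk']
  rw [← hget]
  calc s[i] ≤ s[k-1] := hle
    _ < t := by rw [← hst]; exact h

lemma countP_ofFn {m : ℕ} (g : Fin m → ℝ) (p : ℝ → Bool) :
    (List.ofFn g).countP p = (Finset.univ.filter (fun i => p (g i))).card := by
  induction m with
  | zero => simp
  | succ m ih =>
    rw [List.ofFn_succ, List.countP_cons, ih,
      Fin.card_filter_univ_succ' (fun i => p (g i) = true)]
    simp [add_comm]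

lemma card_high_rank_le {m k : ℕ} (hk : 1 ≤ k) (f : Fin m → ℝ) :
    (Finset.univ.filter (fun j => k ≤ (Finset.univ.filter (fun i => f i < f j)).card)).card
      ≤ m - k := by
  set S := Finset.univ.filter (fun j => k ≤ (Finset.univ.filter (fun i => f i < f j)).card)
    with hS
  rcases S.eq_empty_or_nonempty with h | h
  · simp [h]
  · obtain ⟨j0, hj0, hmin⟩ := S.exists_min_image f h
    have hj0' : k ≤ (Finset.univ.filter (fun i => f i < f j0)).card := by
      simpa [hS] using hj0
    set T := Finset.univ.filter (fun i => f i < f j0) with hT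
    have hsub : T ⊆ Sᶜ := by
      intro i hi
      refine Finset.mem_compl.mpr fun hiS => ?_
      have h1 : f i < f j0 := by simpa [hT] using hi
      exact absurd (hmin i hiS) (not_le.mpr h1)
    have := Finset.card_le_card hsub
    rw [Finset.card_compl] at this
    simp only [Fintype.card_fin] at this
    omega

lemma card_filter_comp_equiv {m : ℕ} (σ : Equiv.Perm (Fin m)) (p : Fin m → Prop)
    [DecidablePred p] :
    (Finset.univ.filter fun i => p (σ i)).card = (Finset.univ.filter p).card := by
  apply Finset.card_bij' (fun a _ => σ a) (fun a _ => σ.symm a) <;> simp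

lemma measurable_rank_set {m k : ℕ} (j : Fin m) :
    MeasurableSet {f : Fin m → ℝ | k ≤ (Finset.univ.filter fun i => f i < f j).card} := by
  have : {f : Fin m → ℝ | k ≤ (Finset.univ.filter fun i => f i < f j).card} =
      ⋃ (T : Finset (Fin m)) (_ : T.card = k), ⋂ i ∈ T, {f : Fin m → ℝ | f i < f j} := by
    ext f
    simp only [Set.mem_setOf_eq, Set.mem_iUnion, Set.mem_iInter]
    constructor
    · intro h
      obtain ⟨T, hT, hcard⟩ := Finset.exists_subset_card_eq h
      exact ⟨T, hcard, fun i hi => by simpa using Finset.mem_filter.mp (hT hi) |>.2⟩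
    · rintro ⟨T, hcard, hT⟩
      calc k = T.card := hcard.symm
        _ ≤ _ := Finset.card_le_card fun i hi =>
            Finset.mem_filter.mpr ⟨Finset.mem_univ i, hT i hi⟩
  rw [this]
  refine MeasurableSet.iUnion fun T => MeasurableSet.iUnion fun _ =>
    MeasurableSet.biInter T.countable_toSet fun i _ =>
      measurableSet_lt (measurable_pi_apply i) (measurable_pi_apply j)

/-- Theorem 2 of the paper (regret calibration guarantee): if the residuals of
the calibration auctions and the test auction are exchangeable, and `qα` is the
`⌈(n+1)(1-α)⌉`-th smallest calibration residual, then the probability that the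
true regret of the test auction exceeds `c` while the acceptance rule
`r̂ < c - qα` accepts it is at most `α`. -/
theorem regret_calibration
    {Ω : Type*} [MeasureSpace Ω] [IsProbabilityMeasure (ℙ : Measure Ω)]
    {n : ℕ} (hn : 1 ≤ n) (α : ℝ) (hα : 0 < α) (hα1 : α < 1)
    (r rhat : Fin (n + 1) → Ω → ℝ)
    (hr : ∀ i, Measurable (r i)) (hrhat : ∀ i, Measurable (rhat i))
    (e : Fin (n + 1) → Ω → ℝ) (he : ∀ i ω, e i ω = r i ω - rhat i ω)
    (hexch : Exchangeable e)
    (k : ℕ) (hk : k = ⌈((n : ℝ) + 1) * (1 - α)⌉₊) (hkn : k ≤ n)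
    (qα : Ω → ℝ)
    (hq : ∀ ω, qα ω = orderStat (List.ofFn (fun i : Fin n => e i.castSucc ω)) k) :
    ∀ c : ℝ,
      ℙ {ω | r (Fin.last n) ω > c ∧ rhat (Fin.last n) ω < c - qα ω} ≤
        ENNReal.ofReal α := by
  intro c
  classical
  have hk1 : 1 ≤ k := by
    rw [hk]
    exact Nat.one_le_iff_ne_zero.mpr (Nat.ceil_pos.mpr (mul_pos (by positivity) (by linarith)) |>.ne')
  have hemeas : ∀ i, Measurable (e i) := by
    intro i
    have : e i = fun ω => r i ω - rhat i ω := funext (he i)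
    rw [this]; exact (hr i).sub (hrhat i)
  -- the events E j
  set A : Fin (n+1) → Set (Fin (n+1) → ℝ) := fun j =>
    {f | k ≤ (Finset.univ.filter fun i => f i < f j).card} with hA
  set E : Fin (n+1) → Set Ω := fun j => (fun ω => fun i => e i ω) ⁻¹' A j with hE
  have hgmeas : Measurable (fun ω => fun i => e i ω) :=
    measurable_pi_lambda _ hemeas
  have hEmeas : ∀ j, MeasurableSet (E j) := fun j => hgmeas (measurable_rank_set j)
  -- equal probabilities by exchangeability
  have hEeq : ∀ j, ℙ (E j) = ℙ (E (Fin.last n)) := by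
    intro j
    set σ : Equiv.Perm (Fin (n+1)) := Equiv.swap j (Fin.last n) with hσ
    have hgσ : Measurable (fun ω => fun i => e (σ i) ω) :=
      measurable_pi_lambda _ fun i => hemeas (σ i)
    have h1 := congrArg (fun μ : Measure (Fin (n+1) → ℝ) => μ (A (Fin.last n))) (hexch σ)
    rw [Measure.map_apply hgσ (measurable_rank_set _),
        Measure.map_apply hgmeas (measurable_rank_set _)] at h1
    have hpre : (fun ω => fun i => e (σ i) ω) ⁻¹' A (Fin.last n) = E j := by
      ext ω
      simp only [hE, hA, Set.mem_preimage, Set.mem_setOf_eq]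
      have hσl : σ (Fin.last n) = j := Equiv.swap_apply_right _ _
      simp only [hσl]
      rw [card_filter_comp_equiv σ (fun i => e i ω < e j ω)]
    rw [hpre] at h1
    exact h1
  -- sum of probabilities bound
  have hsum : ∑ j : Fin (n+1), ℙ (E j) ≤ ((n + 1 - k : ℕ) : ℝ≥0∞) := by
    have h1 : ∀ j, ℙ (E j) = ∫⁻ ω, Set.indicator (E j) (fun _ => 1) ω ∂ℙ := by
      intro j; rw [lintegral_indicator (hEmeas j)]; simp
    calc ∑ j : Fin (n+1), ℙ (E j)
        = ∫⁻ ω, ∑ j : Fin (n+1), Set.indicator (E j) (fun _ => (1:ℝ≥0∞)) ω ∂ℙ := by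
          rw [lintegral_finset_sum]
          · exact Finset.sum_congr rfl fun j _ => h1 j
          · exact fun j _ => (measurable_const.indicator (hEmeas j))
      _ ≤ ∫⁻ _, ((n + 1 - k : ℕ) : ℝ≥0∞) ∂ℙ := by
          apply lintegral_mono
          intro ω
          dsimp only
          have : ∑ j : Fin (n+1), Set.indicator (E j) (fun _ => (1:ℝ≥0∞)) ω =
              ((Finset.univ.filter fun j => ω ∈ E j).card : ℝ≥0∞) := by
            rw [Finset.card_filter]
            push_cast
            exact Finset.sum_congr rfl fun j _ => by
              by_cases hj : ω ∈ E j <;> simp [Set.indicator, hj]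
          rw [this]
          have hle := card_high_rank_le (m := n+1) hk1 (fun i => e i ω)
          have : (Finset.univ.filter fun j => ω ∈ E j) =
              (Finset.univ.filter fun j =>
                k ≤ (Finset.univ.filter fun i => e i ω < e j ω).card) := by
            apply Finset.filter_congr
            intro j _
            simp [hE, hA]
          rw [this]
          exact_mod_cast Nat.cast_le.mpr hle
      _ = ((n + 1 - k : ℕ) : ℝ≥0∞) := by simp
  -- so (n+1) * p ≤ n+1-k
  have hnp : ((n:ℝ≥0∞) + 1) * ℙ (E (Fin.last n)) ≤ ((n + 1 - k : ℕ) : ℝ≥0∞) := by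
    calc ((n:ℝ≥0∞) + 1) * ℙ (E (Fin.last n))
        = ∑ _j : Fin (n+1), ℙ (E (Fin.last n)) := by
          simp [Finset.sum_const, mul_comm]
      _ = ∑ j : Fin (n+1), ℙ (E j) := Finset.sum_congr rfl fun j _ => (hEeq j).symm
      _ ≤ _ := hsum
  -- key bound: p ≤ α
  have hkey : ℙ (E (Fin.last n)) ≤ ENNReal.ofReal α := by
    have hreal : ((n + 1 - k : ℕ) : ℝ) ≤ ((n:ℝ) + 1) * α := by
      have hceil : ((n:ℝ) + 1) * (1 - α) ≤ k := by rw [hk]; exact Nat.le_ceil _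
      have : ((n + 1 - k : ℕ) : ℝ) = (n:ℝ) + 1 - k := by
        push_cast [Nat.cast_sub (by omega : k ≤ n + 1)]; ring
      rw [this]; nlinarith
    have h2 : ((n + 1 - k : ℕ) : ℝ≥0∞) ≤ ((n:ℝ≥0∞) + 1) * ENNReal.ofReal α := by
      rw [← ENNReal.ofReal_natCast]
      calc ENNReal.ofReal ((n + 1 - k : ℕ) : ℝ)
          ≤ ENNReal.ofReal (((n:ℝ) + 1) * α) := ENNReal.ofReal_le_ofReal hreal
        _ = ENNReal.ofReal ((n:ℝ) + 1) * ENNReal.ofReal α :=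
            ENNReal.ofReal_mul (by positivity)
        _ = ((n:ℝ≥0∞) + 1) * ENNReal.ofReal α := by
            rw [ENNReal.ofReal_add (by positivity) zero_le_one]
            simp [ENNReal.ofReal_natCast]
    have h3 : ((n:ℝ≥0∞) + 1) * ℙ (E (Fin.last n)) ≤ ((n:ℝ≥0∞) + 1) * ENNReal.ofReal α :=
      hnp.trans h2
    have hne : ((n:ℝ≥0∞) + 1) ≠ 0 := by
      simp
    have hnt : ((n:ℝ≥0∞) + 1) ≠ ⊤ := by
      simp [ENNReal.add_ne_top]
    exact (ENNReal.mul_le_mul_iff_right hne hnt).mp h3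
  -- reduce original event to E (last n)
  refine le_trans (measure_mono ?_) hkey
  intro ω hω
  obtain ⟨h1, h2⟩ := hω
  have helast : qα ω < e (Fin.last n) ω := by
    rw [he]
    have h3 := sub_lt_sub h1 h2
    linarith
  have hlt : orderStat (List.ofFn (fun i : Fin n => e i.castSucc ω)) k
      < e (Fin.last n) ω := by rw [← hq]; exact helast
  have hcount := orderStat_lt hk1 (by simp [List.length_ofFn]; omega) hlt
  rw [countP_ofFn] at hcount
  -- embed the Fin n count into the Fin (n+1) count
  simp only [hE, hA, Set.mem_preimage, Set.mem_setOf_eq]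
  refine hcount.trans (Finset.card_le_card_of_injOn (fun i => Fin.castSucc i) ?_ ?_)
  · intro i hi
    simp only [Finset.coe_filter, Set.mem_setOf_eq, Finset.mem_filter, Finset.mem_univ, true_and, decide_eq_true_eq] at hi ⊢
    exact hi
  · exact fun a _ b _ hab => Fin.castSucc_injective n hab
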